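/- Every logarithmically completely monotone function on (0,∞) is completely monotone. -/

import Mathlib

def CompletelyMonotone (f : ℝ → ℝ) : Prop :=
  ∀ n : ℕ, ∀ s : ℝ, 0 < s → 0 ≤ (-1 : ℝ) ^ n * iteratedDeriv n f s

def LogCompletelyMonotone (h : ℝ → ℝ) : Prop :=
  (∀ s : ℝ, 0 < s → 0 < h s) ∧
    CompletelyMonotone (fun s => -(deriv (fun u => Real.log (h u)) s))

namespace LCMAux

open Set Filter

/-- `F` has (genuine) derivatives on `U` up to order `m` (exclusive at the top). -/
def PD (U : Set ℝ) (m : ℕ) (F : ℝ → ℝ) : Prop :=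
  ∀ k < m, ∀ u ∈ U, DifferentiableAt ℝ (iteratedDeriv k F) u

lemma eq_iteratedDeriv {U : Set ℝ} (hU : IsOpen U) {F G : ℝ → ℝ}
    (hFG : ∀ u ∈ U, F u = G u) :
    ∀ k, ∀ u ∈ U, iteratedDeriv k F u = iteratedDeriv k G u := by
  intro k
  induction k with
  | zero => intro u hu; simpa [iteratedDeriv_zero] using hFG u hu
  | succ k ih =>
    intro u hu
    rw [iteratedDeriv_succ, iteratedDeriv_succ]
    exact (Filter.eventuallyEq_of_mem (hU.mem_nhds hu) (fun v hv => ih v hv)).deriv_eq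

lemma diffAt_congr {U : Set ℝ} (hU : IsOpen U) {F G : ℝ → ℝ}
    (hFG : ∀ u ∈ U, F u = G u) {u : ℝ} (hu : u ∈ U)
    (hF : DifferentiableAt ℝ F u) : DifferentiableAt ℝ G u :=
  (Filter.eventuallyEq_of_mem (hU.mem_nhds hu) (fun v hv => hFG v hv)).differentiableAt_iff.mp hF

lemma pd_mono {U : Set ℝ} {m m' : ℕ} {F : ℝ → ℝ} (hF : PD U m F) (hm : m' ≤ m) :
    PD U m' F := fun k hk => hF k (lt_of_lt_of_le hk hm)

lemma pd_congr {U : Set ℝ} (hU : IsOpen U) {F G : ℝ → ℝ} {m : ℕ}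
    (hFG : ∀ u ∈ U, F u = G u) (hF : PD U m F) : PD U m G := by
  intro k hk u hu
  exact diffAt_congr hU (fun v hv => eq_iteratedDeriv hU hFG k v hv) hu (hF k hk u hu)

lemma pd_diff_zero {U : Set ℝ} {m : ℕ} {F : ℝ → ℝ} (hF : PD U (m + 1) F) :
    ∀ u ∈ U, DifferentiableAt ℝ F u := by
  intro u hu
  have := hF 0 (Nat.succ_pos m) u hu
  rwa [iteratedDeriv_zero] at this

lemma pd_neg {U : Set ℝ} {m : ℕ} {F : ℝ → ℝ} (hF : PD U m F) :
    PD U m (fun x => -F x) := by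
  intro k hk u hu
  have heq : iteratedDeriv k (fun x => -F x) = fun x => -(iteratedDeriv k F x) :=
    funext (iteratedDeriv_neg k F)
  rw [heq]
  exact (hF k hk u hu).neg

lemma pd_deriv {U : Set ℝ} {m : ℕ} {F : ℝ → ℝ} (hF : PD U (m + 1) F) :
    PD U m (fun x => deriv F x) := by
  intro k hk u hu
  have := hF (k + 1) (by omega) u hu
  rwa [iteratedDeriv_succ'] at this

lemma pd_add_eq {U : Set ℝ} (hU : IsOpen U) {F G : ℝ → ℝ} {m : ℕ}
    (hF : PD U m F) (hG : PD U m G) :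
    ∀ k ≤ m, ∀ u ∈ U, iteratedDeriv k (fun x => F x + G x) u
      = iteratedDeriv k F u + iteratedDeriv k G u := by
  intro k
  induction k with
  | zero => intro _ u _; simp [iteratedDeriv_zero]
  | succ k ih =>
    intro hk u hu
    rw [iteratedDeriv_succ, iteratedDeriv_succ, iteratedDeriv_succ]
    have hev : (iteratedDeriv k fun x => F x + G x)
        =ᶠ[nhds u] fun x => iteratedDeriv k F x + iteratedDeriv k G x :=
      Filter.eventuallyEq_of_mem (hU.mem_nhds hu) (fun v hv => ih (by omega) v hv)
    rw [hev.deriv_eq]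
    exact deriv_add (hF k (by omega) u hu) (hG k (by omega) u hu)

lemma pd_add {U : Set ℝ} (hU : IsOpen U) {F G : ℝ → ℝ} {m : ℕ}
    (hF : PD U m F) (hG : PD U m G) : PD U m (fun x => F x + G x) := by
  intro k hk u hu
  have hev : (iteratedDeriv k fun x => F x + G x)
      =ᶠ[nhds u] fun x => iteratedDeriv k F x + iteratedDeriv k G x :=
    Filter.eventuallyEq_of_mem (hU.mem_nhds hu)
      (fun v hv => pd_add_eq hU hF hG k (le_of_lt hk) v hv)
  exact hev.differentiableAt_iff.mpr ((hF k hk u hu).add (hG k hk u hu))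

lemma pd_mul {U : Set ℝ} (hU : IsOpen U) :
    ∀ (m : ℕ) (F G : ℝ → ℝ), PD U m F → PD U m G → PD U m (fun x => F x * G x) := by
  intro m
  induction m with
  | zero => intro F G _ _ k hk u hu; exact absurd hk (Nat.not_lt_zero k)
  | succ m ih =>
    intro F G hF hG k hk u hu
    have hF0 := pd_diff_zero hF
    have hG0 := pd_diff_zero hG
    rcases k with _ | j
    · rw [iteratedDeriv_zero]
      exact (hF0 u hu).mul (hG0 u hu)
    · have hder : ∀ v ∈ U, deriv (fun x => F x * G x) v
          = deriv F v * G v + F v * deriv G v :=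
        fun v hv => deriv_mul (hF0 v hv) (hG0 v hv)
      have hSum : PD U m (fun x => deriv F x * G x + F x * deriv G x) :=
        pd_add hU (ih _ _ (pd_deriv hF) (pd_mono hG (Nat.le_succ m)))
          (ih _ _ (pd_mono hF (Nat.le_succ m)) (pd_deriv hG))
      have heq : ∀ v ∈ U, iteratedDeriv (j + 1) (fun x => F x * G x) v
          = iteratedDeriv j (fun x => deriv F x * G x + F x * deriv G x) v := by
        intro v hv
        rw [iteratedDeriv_succ']
        exact eq_iteratedDeriv hU hder j v hv
      exact (Filter.eventuallyEq_of_mem (hU.mem_nhds hu)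
        (fun v hv => heq v hv)).differentiableAt_iff.mpr (hSum j (by omega) u hu)

lemma pd_inv {U : Set ℝ} (hU : IsOpen U) :
    ∀ (m : ℕ) (F : ℝ → ℝ), PD U m F → (∀ u ∈ U, F u ≠ 0) →
      PD U m (fun x => (F x)⁻¹) := by
  intro m
  induction m with
  | zero => intro F _ _ k hk u hu; exact absurd hk (Nat.not_lt_zero k)
  | succ m ih =>
    intro F hF hne k hk u hu
    have hF0 := pd_diff_zero hF
    rcases k with _ | j
    · rw [iteratedDeriv_zero]
      exact (hF0 u hu).inv (hne u hu)
    · have hder : ∀ v ∈ U, deriv (fun x => (F x)⁻¹) v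
          = -deriv F v * ((F v)⁻¹ * (F v)⁻¹) := by
        intro v hv
        have hd := ((hF0 v hv).hasDerivAt).inv (hne v hv)
        rw [show (fun x => (F x)⁻¹) = F⁻¹ from rfl, hd.deriv, div_eq_mul_inv, sq, mul_inv]
      have hInv : PD U m (fun x => (F x)⁻¹) := ih F (pd_mono hF (Nat.le_succ m)) hne
      have hSum : PD U m (fun x => -deriv F x * ((F x)⁻¹ * (F x)⁻¹)) :=
        pd_mul hU m _ _ (pd_neg (pd_deriv hF)) (pd_mul hU m _ _ hInv hInv)
      have heq : ∀ v ∈ U, iteratedDeriv (j + 1) (fun x => (F x)⁻¹) v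
          = iteratedDeriv j (fun x => -deriv F x * ((F x)⁻¹ * (F x)⁻¹)) v := by
        intro v hv
        rw [iteratedDeriv_succ']
        exact eq_iteratedDeriv hU hder j v hv
      exact (Filter.eventuallyEq_of_mem (hU.mem_nhds hu)
        (fun v hv => heq v hv)).differentiableAt_iff.mpr (hSum j (by omega) u hu)

/-- If `C` has `m` genuine derivatives on `U` with the `m`-th differentiable at `s`,
and `D` has `m+1` genuine derivatives on `U`, then the `m`-th derivative of `C*D`
is differentiable at `s`. -/
lemma pd_mul_top {U : Set ℝ} (hU : IsOpen U) {s : ℝ} (hs : s ∈ U) :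
    ∀ (m : ℕ) (C D : ℝ → ℝ), PD U m C → DifferentiableAt ℝ (iteratedDeriv m C) s →
      PD U (m + 1) D → DifferentiableAt ℝ (iteratedDeriv m (fun x => C x * D x)) s := by
  intro m
  induction m with
  | zero =>
    intro C D _ hCt hD
    have hD0 : DifferentiableAt ℝ D s := pd_diff_zero hD s hs
    rw [iteratedDeriv_zero] at hCt ⊢
    exact hCt.mul hD0
  | succ m ih =>
    intro C D hC hCt hD
    have hC0 := pd_diff_zero hC
    have hD0 := pd_diff_zero (pd_mono hD (Nat.le_succ (m + 1)))
    have hder : ∀ v ∈ U, deriv (fun x => C x * D x) v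
        = deriv C v * D v + C v * deriv D v :=
      fun v hv => deriv_mul (hC0 v hv) (hD0 v hv)
    have heq : ∀ v ∈ U, iteratedDeriv (m + 1) (fun x => C x * D x) v
        = iteratedDeriv m (fun x => deriv C x * D x + C x * deriv D x) v := by
      intro v hv
      rw [iteratedDeriv_succ']
      exact eq_iteratedDeriv hU hder m v hv
    have h1 : DifferentiableAt ℝ (iteratedDeriv m (fun x => deriv C x * D x)) s := by
      refine ih (fun x => deriv C x) D (pd_deriv hC) ?_ (pd_mono hD (Nat.le_succ (m + 1)))
      rwa [iteratedDeriv_succ'] at hCt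
    have h2 : DifferentiableAt ℝ (iteratedDeriv m (fun x => C x * deriv D x)) s :=
      ih C (fun x => deriv D x) (pd_mono hC (Nat.le_succ m)) (hC m (Nat.lt_succ_self m) s hs)
        (pd_deriv hD)
    have hPsum1 : PD U m (fun x => deriv C x * D x) :=
      pd_mul hU m _ _ (pd_deriv hC) (pd_mono hD (by omega))
    have hPsum2 : PD U m (fun x => C x * deriv D x) :=
      pd_mul hU m _ _ (pd_mono hC (Nat.le_succ m)) (pd_mono (pd_deriv hD) (Nat.le_succ m))
    have heq2 : ∀ v ∈ U, iteratedDeriv m (fun x => deriv C x * D x + C x * deriv D x) v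
        = iteratedDeriv m (fun x => deriv C x * D x) v
          + iteratedDeriv m (fun x => C x * deriv D x) v :=
      pd_add_eq hU hPsum1 hPsum2 m le_rfl
    have hsum_diff : DifferentiableAt ℝ
        (iteratedDeriv m (fun x => deriv C x * D x + C x * deriv D x)) s :=
      (Filter.eventuallyEq_of_mem (hU.mem_nhds hs)
        (fun v hv => heq2 v hv)).differentiableAt_iff.mpr (h1.add h2)
    exact (Filter.eventuallyEq_of_mem (hU.mem_nhds hs)
      (fun v hv => heq v hv)).differentiableAt_iff.mpr hsum_diff

/-- "Completely monotone up to order `m` on `U`, with one extra derivative at `s`". -/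
def CMa (U : Set ℝ) (s : ℝ) : ℕ → (ℝ → ℝ) → Prop
  | 0 => fun F => (∀ u ∈ U, 0 ≤ F u) ∧ DifferentiableAt ℝ F s ∧ deriv F s ≤ 0
  | m + 1 => fun F => (∀ u ∈ U, 0 ≤ F u) ∧ (∀ u ∈ U, DifferentiableAt ℝ F u) ∧
      CMa U s m (fun u => -deriv F u)

lemma cma_congr {U : Set ℝ} (hU : IsOpen U) {s : ℝ} (hs : s ∈ U) :
    ∀ (m : ℕ) (F G : ℝ → ℝ), (∀ u ∈ U, F u = G u) → CMa U s m F → CMa U s m G := by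
  intro m
  induction m with
  | zero =>
    intro F G hFG ⟨h1, h2, h3⟩
    refine ⟨fun u hu => (hFG u hu) ▸ h1 u hu, diffAt_congr hU hFG hs h2, ?_⟩
    rwa [← (Filter.eventuallyEq_of_mem (hU.mem_nhds hs) (fun v hv => hFG v hv)).deriv_eq]
  | succ m ih =>
    intro F G hFG ⟨h1, h2, h3⟩
    refine ⟨fun u hu => (hFG u hu) ▸ h1 u hu,
      fun u hu => diffAt_congr hU hFG hu (h2 u hu), ?_⟩
    refine ih _ _ ?_ h3
    intro u hu
    have : deriv F u = deriv G u :=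
      (Filter.eventuallyEq_of_mem (hU.mem_nhds hu) (fun v hv => hFG v hv)).deriv_eq
    rw [this]

lemma cma_mono {U : Set ℝ} {s : ℝ} (hs : s ∈ U) :
    ∀ (m : ℕ) (F : ℝ → ℝ), CMa U s (m + 1) F → CMa U s m F := by
  intro m
  induction m with
  | zero =>
    intro F ⟨h1, h2, h3⟩
    refine ⟨h1, h2 s hs, ?_⟩
    have h4 : (0 : ℝ) ≤ -deriv F s := h3.1 s hs
    linarith
  | succ m ih =>
    intro F ⟨h1, h2, h3⟩
    exact ⟨h1, h2, ih _ h3⟩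

lemma cma_add {U : Set ℝ} (hU : IsOpen U) {s : ℝ} (hs : s ∈ U) :
    ∀ (m : ℕ) (F G : ℝ → ℝ), CMa U s m F → CMa U s m G →
      CMa U s m (fun u => F u + G u) := by
  intro m
  induction m with
  | zero =>
    intro F G ⟨hF1, hF2, hF3⟩ ⟨hG1, hG2, hG3⟩
    refine ⟨fun u hu => add_nonneg (hF1 u hu) (hG1 u hu), hF2.add hG2, ?_⟩
    rw [deriv_fun_add hF2 hG2]
    linarith
  | succ m ih =>
    intro F G ⟨hF1, hF2, hF3⟩ ⟨hG1, hG2, hG3⟩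
    refine ⟨fun u hu => add_nonneg (hF1 u hu) (hG1 u hu),
      fun u hu => (hF2 u hu).add (hG2 u hu), ?_⟩
    have hsum := ih _ _ hF3 hG3
    refine cma_congr hU hs m _ _ ?_ hsum
    intro u hu
    rw [deriv_fun_add (hF2 u hu) (hG2 u hu)]
    ring

lemma cma_mul {U : Set ℝ} (hU : IsOpen U) {s : ℝ} (hs : s ∈ U) :
    ∀ (m : ℕ) (F G : ℝ → ℝ), CMa U s m F → CMa U s m G →
      CMa U s m (fun u => F u * G u) := by
  intro m
  induction m with
  | zero =>
    intro F G ⟨hF1, hF2, hF3⟩ ⟨hG1, hG2, hG3⟩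
    refine ⟨fun u hu => mul_nonneg (hF1 u hu) (hG1 u hu), hF2.mul hG2, ?_⟩
    rw [deriv_fun_mul hF2 hG2]
    have h1 := hF1 s hs
    have h2 := hG1 s hs
    nlinarith
  | succ m ih =>
    intro F G hF hG
    obtain ⟨hF1, hF2, hF3⟩ := hF
    obtain ⟨hG1, hG2, hG3⟩ := hG
    refine ⟨fun u hu => mul_nonneg (hF1 u hu) (hG1 u hu),
      fun u hu => (hF2 u hu).mul (hG2 u hu), ?_⟩
    have t1 : CMa U s m (fun u => -deriv F u * G u) :=
      ih _ _ hF3 (cma_mono hs m G ⟨hG1, hG2, hG3⟩)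
    have t2 : CMa U s m (fun u => F u * -deriv G u) :=
      ih _ _ (cma_mono hs m F ⟨hF1, hF2, hF3⟩) hG3
    have hsum := cma_add hU hs m _ _ t1 t2
    refine cma_congr hU hs m _ _ ?_ hsum
    intro u hu
    rw [deriv_fun_mul (hF2 u hu) (hG2 u hu)]
    ring

lemma iteratedDeriv_neg_deriv (F : ℝ → ℝ) (k : ℕ) :
    iteratedDeriv k (fun u => -deriv F u) = fun x => -(iteratedDeriv (k + 1) F x) := by
  funext x
  rw [iteratedDeriv_succ']
  exact iteratedDeriv_neg k (deriv F) x

lemma cma_of_signs {U : Set ℝ} (hU : IsOpen U) {s : ℝ} (hs : s ∈ U) :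
    ∀ (m : ℕ) (F : ℝ → ℝ), PD U m F → DifferentiableAt ℝ (iteratedDeriv m F) s →
      (∀ k ≤ m, ∀ u ∈ U, 0 ≤ (-1 : ℝ) ^ k * iteratedDeriv k F u) →
      (0 ≤ (-1 : ℝ) ^ (m + 1) * deriv (iteratedDeriv m F) s) →
      CMa U s m F := by
  intro m
  induction m with
  | zero =>
    intro F _ hds hsgn htop
    refine ⟨fun u hu => by simpa using hsgn 0 le_rfl u hu, ?_, ?_⟩
    · rwa [iteratedDeriv_zero] at hds
    · rw [iteratedDeriv_zero] at htop
      simpa using htop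
  | succ m ih =>
    intro F hpd hds hsgn htop
    refine ⟨fun u hu => by simpa using hsgn 0 (by omega) u hu, pd_diff_zero hpd, ?_⟩
    refine ih (fun u => -deriv F u) ?_ ?_ ?_ ?_
    · intro k hk u hu
      rw [iteratedDeriv_neg_deriv F k]
      exact (hpd (k + 1) (by omega) u hu).neg
    · rw [iteratedDeriv_neg_deriv F m]
      exact hds.neg
    · intro k hk u hu
      rw [iteratedDeriv_neg_deriv F k]
      have h1 := hsgn (k + 1) (by omega) u hu
      rw [pow_succ] at h1
      have he : (-1 : ℝ) ^ k * -(iteratedDeriv (k + 1) F u)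
          = (-1 : ℝ) ^ k * (-1) * iteratedDeriv (k + 1) F u := by ring
      rw [he]
      exact h1
    · rw [iteratedDeriv_neg_deriv F m, deriv.fun_neg]
      rw [pow_succ (-1 : ℝ) (m + 1)] at htop
      have he : (-1 : ℝ) ^ (m + 1) * -(deriv (iteratedDeriv (m + 1) F) s)
          = (-1 : ℝ) ^ (m + 1) * (-1) * deriv (iteratedDeriv (m + 1) F) s := by ring
      rw [he]
      exact htop

lemma cma_extract {U : Set ℝ} {s : ℝ} :
    ∀ (m : ℕ) (F : ℝ → ℝ), CMa U s m F →
      0 ≤ (-1 : ℝ) ^ (m + 1) * deriv (iteratedDeriv m F) s := by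
  intro m
  induction m with
  | zero =>
    intro F ⟨_, _, h3⟩
    rw [iteratedDeriv_zero]
    have he : ((-1 : ℝ)) ^ (0 + 1) = -1 := by norm_num
    rw [he]
    linarith
  | succ m ih =>
    intro F ⟨_, _, h3⟩
    have hx := ih _ h3
    rw [iteratedDeriv_neg_deriv F m, deriv.fun_neg] at hx
    have he : (-1 : ℝ) ^ (m + 1) * -(deriv (iteratedDeriv (m + 1) F) s)
        = (-1 : ℝ) ^ (m + 1) * (-1) * deriv (iteratedDeriv (m + 1) F) s := by ring
    rw [he] at hx
    rw [pow_succ (-1 : ℝ) (m + 1)]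
    exact hx

end LCMAux

theorem completelyMonotone_of_logCompletelyMonotone (h : ℝ → ℝ)
    (hh : LogCompletelyMonotone h) : CompletelyMonotone h := by
  obtain ⟨hpos, hcm⟩ := hh
  set g : ℝ → ℝ := fun s => -(deriv (fun u => Real.log (h u)) s) with hgdef
  intro n
  induction n using Nat.strong_induction_on with
  | _ n IH =>
  rcases n with _ | n
  · -- n = 0
    intro s hs
    simpa [iteratedDeriv_zero] using (hpos s hs).le
  rcases n with _ | m
  · -- n = 1
    intro s hs
    have hg0 : 0 ≤ g s := by simpa [iteratedDeriv_zero] using hcm 0 s hs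
    rw [iteratedDeriv_one]
    have hm1 : ((-1 : ℝ)) ^ 1 = -1 := by norm_num
    rw [hm1]
    by_cases hd : DifferentiableAt ℝ h s
    · have hlog : deriv (fun u => Real.log (h u)) s = deriv h s / h s :=
        ((hd.hasDerivAt).log (ne_of_gt (hpos s hs))).deriv
      have hgs : g s = -(deriv h s / h s) := by rw [hgdef]; simp only [hlog]
      have hhs := hpos s hs
      have hq : deriv h s / h s ≤ 0 := by rw [hgs] at hg0; linarith
      have : deriv h s = (deriv h s / h s) * h s := by field_simp
      nlinarith
    · rw [deriv_zero_of_not_differentiableAt hd]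
      simp
  · -- n = m + 2
    intro s hs
    rw [iteratedDeriv_succ]
    by_cases hd1 : DifferentiableAt ℝ (iteratedDeriv (m + 1) h) s
    swap
    · rw [deriv_zero_of_not_differentiableAt hd1, mul_zero]
    by_cases hz : iteratedDeriv (m + 1) h s = 0
    · -- local extremum of a sign-constant function
      have hev : ∀ᶠ u in nhds s, (0 : ℝ) < u := eventually_gt_nhds hs
      have hmin : IsLocalMin (fun u => (-1 : ℝ) ^ (m + 1) * iteratedDeriv (m + 1) h u) s :=
        hev.mono (fun u hu => by
          show (-1 : ℝ) ^ (m + 1) * iteratedDeriv (m + 1) h s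
              ≤ (-1 : ℝ) ^ (m + 1) * iteratedDeriv (m + 1) h u
          rw [hz, mul_zero]
          exact IH (m + 1) (by omega) u hu)
      have h0 := hmin.deriv_eq_zero
      rw [deriv_const_mul _ hd1] at h0
      have hne0 : ((-1 : ℝ)) ^ (m + 1) ≠ 0 := pow_ne_zero _ (by norm_num)
      have hz2 : deriv (iteratedDeriv (m + 1) h) s = 0 := by
        rcases mul_eq_zero.mp h0 with hc | hc
        · exact absurd hc hne0
        · exact hc
      rw [hz2, mul_zero]
    · -- hard case : bootstrap a neighbourhood of genuine differentiability
      have boot : ∀ t, t ≤ m → ∃ a b : ℝ, a < s ∧ s < b ∧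
          Set.Ioo a b ⊆ Set.Ioi (0 : ℝ) ∧
          (∀ j, m + 1 - t ≤ j → j ≤ m + 1 → ∀ u ∈ Set.Ioo a b, iteratedDeriv j h u ≠ 0) ∧
          (∀ j, m - t ≤ j → j ≤ m → ∀ u ∈ Set.Ioo a b,
            DifferentiableAt ℝ (iteratedDeriv j h) u) := by
        intro t
        induction t with
        | zero =>
          intro _
          have hev : ∀ᶠ u in nhds s, iteratedDeriv (m + 1) h u ≠ 0 ∧ 0 < u :=
            (hd1.continuousAt.eventually_ne hz).and (eventually_gt_nhds hs)
          obtain ⟨a, b, hab, hsub⟩ := mem_nhds_iff_exists_Ioo_subset.mp hev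
          refine ⟨a, b, hab.1, hab.2, fun u hu => (hsub hu).2, ?_, ?_⟩
          · intro j hj1 hj2 u hu
            have hje : j = m + 1 := by omega
            subst hje
            exact (hsub hu).1
          · intro j hj1 hj2 u hu
            have hje : j = m := by omega
            subst hje
            by_contra hnd
            exact (hsub hu).1
              (by rw [iteratedDeriv_succ]; exact deriv_zero_of_not_differentiableAt hnd)
        | succ t iht =>
          intro ht
          obtain ⟨a, b, has, hsb, hab0, hne, hdiff⟩ := iht (by omega)
          set k := m - t with hk
          have hsI : s ∈ Set.Ioo a b := ⟨has, hsb⟩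
          have hdk : ∀ u ∈ Set.Ioo a b, DifferentiableAt ℝ (iteratedDeriv k h) u :=
            fun u hu => hdiff k (by omega) (by omega) u hu
          have hcont : ContinuousOn (iteratedDeriv k h) (Set.Ioo a b) :=
            fun u hu => (hdk u hu).continuousAt.continuousWithinAt
          have hne1 : ∀ u ∈ Set.Ioo a b, iteratedDeriv (k + 1) h u ≠ 0 :=
            fun u hu => hne (k + 1) (by omega) (by omega) u hu
          have hks : iteratedDeriv k h s ≠ 0 := by
            intro h0
            have hb'1 : s < (s + b) / 2 := by linarith
            have hb'I : (s + b) / 2 ∈ Set.Ioo a b := ⟨by linarith, by linarith⟩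
            rcases Nat.even_or_odd (k + 1) with hpar | hpar
            · have hdpos : ∀ x ∈ interior (Set.Ioo a b),
                  0 < deriv (iteratedDeriv k h) x := by
                rw [interior_Ioo]
                intro x hx
                have hsg := IH (k + 1) (by omega) x (hab0 hx)
                rw [hpar.neg_one_pow, one_mul] at hsg
                rw [← iteratedDeriv_succ]
                exact lt_of_le_of_ne hsg (Ne.symm (hne1 x hx))
              have hmono := strictMonoOn_of_deriv_pos (convex_Ioo a b) hcont hdpos
              have hlt := hmono hsI hb'I hb'1
              rw [h0] at hlt
              have hkodd : Odd k := Nat.not_even_iff_odd.mp (Nat.even_add_one.mp hpar)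
              have hsg2 := IH k (by omega) ((s + b) / 2) (hab0 hb'I)
              rw [hkodd.neg_one_pow] at hsg2
              linarith
            · have hdneg : ∀ x ∈ interior (Set.Ioo a b),
                  deriv (iteratedDeriv k h) x < 0 := by
                rw [interior_Ioo]
                intro x hx
                have hsg := IH (k + 1) (by omega) x (hab0 hx)
                rw [hpar.neg_one_pow] at hsg
                rw [← iteratedDeriv_succ]
                have := hne1 x hx
                cases lt_or_gt_of_ne this with
                | inl hlt' => exact hlt'
                | inr hgt' => nlinarith
              have hanti := strictAntiOn_of_deriv_neg (convex_Ioo a b) hcont hdneg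
              have hlt := hanti hsI hb'I hb'1
              rw [h0] at hlt
              have hkeven : Even k := by
                rcases Nat.even_or_odd k with he | ho
                · exact he
                · exact absurd hpar (Nat.not_odd_iff_even.mpr ho.add_one)
              have hsg2 := IH k (by omega) ((s + b) / 2) (hab0 hb'I)
              rw [hkeven.neg_one_pow, one_mul] at hsg2
              linarith
          have hev2 : ∀ᶠ u in nhds s, iteratedDeriv k h u ≠ 0 ∧ u ∈ Set.Ioo a b :=
            ((hdk s hsI).continuousAt.eventually_ne hks).and
              (Filter.eventually_of_mem (isOpen_Ioo.mem_nhds hsI) (fun x hx => hx))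
          obtain ⟨a', b', hab', hsub'⟩ := mem_nhds_iff_exists_Ioo_subset.mp hev2
          refine ⟨a', b', hab'.1, hab'.2, fun u hu => hab0 (hsub' hu).2, ?_, ?_⟩
          · intro j hj1 hj2 u hu
            by_cases hjk : j = k
            · subst hjk
              exact (hsub' hu).1
            · exact hne j (by omega) hj2 u (hsub' hu).2
          · intro j hj1 hj2 u hu
            by_cases hjge : m - t ≤ j
            · exact hdiff j hjge hj2 u (hsub' hu).2
            · by_contra hnd
              apply (hsub' hu).1
              have hjj : k = j + 1 := by omega
              rw [hjj, iteratedDeriv_succ]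
              exact deriv_zero_of_not_differentiableAt hnd
      obtain ⟨a, b, has, hsb, hab0, hne, hdiff⟩ := boot m le_rfl
      set U := Set.Ioo a b with hUdef
      have hUo : IsOpen U := isOpen_Ioo
      have hsU : s ∈ U := ⟨has, hsb⟩
      have hU0 : U ⊆ Set.Ioi (0 : ℝ) := hab0
      have hhpos : ∀ u ∈ U, 0 < h u := fun u hu => hpos u (hU0 hu)
      have hhne : ∀ u ∈ U, h u ≠ 0 := fun u hu => ne_of_gt (hhpos u hu)
      have pdh : LCMAux.PD U (m + 1) h := fun kk hkk u hu =>
        hdiff kk (by omega) (by omega) u hu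
      have hd0 : ∀ u ∈ U, DifferentiableAt ℝ h u := by
        intro u hu
        have := hdiff 0 (by omega) (by omega) u hu
        rwa [iteratedDeriv_zero] at this
      have hlog : ∀ u ∈ U, deriv (fun x => Real.log (h x)) u = deriv h u / h u :=
        fun u hu => (((hd0 u hu).hasDerivAt).log (hhne u hu)).deriv
      have hgval : ∀ u ∈ U, g u = -deriv h u * (h u)⁻¹ := by
        intro u hu
        rw [hgdef]
        simp only
        rw [hlog u hu, div_eq_mul_inv]
        ring
      have hrel : ∀ u ∈ U, g u * h u = -deriv h u := by
        intro u hu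
        rw [hgval u hu, mul_assoc, inv_mul_cancel₀ (hhne u hu), mul_one]
      have pdC : LCMAux.PD U m (fun x => -deriv h x) :=
        LCMAux.pd_neg (LCMAux.pd_deriv pdh)
      have pdinv : LCMAux.PD U (m + 1) (fun x => (h x)⁻¹) :=
        LCMAux.pd_inv hUo (m + 1) h pdh hhne
      have pdg : LCMAux.PD U m g := by
        refine LCMAux.pd_congr hUo (fun u hu => (hgval u hu).symm) ?_
        exact LCMAux.pd_mul hUo m _ _ pdC (LCMAux.pd_mono pdinv (Nat.le_succ m))
      have hCtop : DifferentiableAt ℝ (iteratedDeriv m (fun x => -deriv h x)) s := by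
        rw [LCMAux.iteratedDeriv_neg_deriv h m]
        exact hd1.neg
      have hgtop : DifferentiableAt ℝ (iteratedDeriv m g) s := by
        have hx := LCMAux.pd_mul_top hUo hsU m _ _ pdC hCtop pdinv
        exact LCMAux.diffAt_congr hUo
          (fun v hv => LCMAux.eq_iteratedDeriv hUo (fun u hu => (hgval u hu).symm) m v hv)
          hsU hx
      have cmag : ∀ kk, kk ≤ m → LCMAux.CMa U s kk g := by
        intro kk hkk
        refine LCMAux.cma_of_signs hUo hsU kk g (LCMAux.pd_mono pdg hkk) ?_ ?_ ?_
        · rcases eq_or_lt_of_le hkk with rfl | hlt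
          · exact hgtop
          · exact pdg kk hlt s hsU
        · intro k' _ u hu
          exact hcm k' u (hU0 hu)
        · rw [← iteratedDeriv_succ]
          exact hcm (kk + 1) s hs
      have cmah : ∀ kk, kk ≤ m + 1 → LCMAux.CMa U s kk h := by
        intro kk
        induction kk with
        | zero =>
          intro _
          refine ⟨fun u hu => (hhpos u hu).le, hd0 s hsU, ?_⟩
          have hr := hrel s hsU
          have hg0 : 0 ≤ g s := by simpa [iteratedDeriv_zero] using hcm 0 s hs
          nlinarith [hhpos s hsU]
        | succ kk ihk =>
          intro hkk
          refine ⟨fun u hu => (hhpos u hu).le, hd0, ?_⟩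
          have hmul := LCMAux.cma_mul hUo hsU kk g h (cmag kk (by omega)) (ihk (by omega))
          exact LCMAux.cma_congr hUo hsU kk _ _ (fun u hu => hrel u hu) hmul
      exact LCMAux.cma_extract (m + 1) h (cmah (m + 1) le_rfl)
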